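/- Let k be a commutative ring, λ ∈ k, X a set, and A = MonoidAlgebra k (FreeMonoid X). Suppose Δ : A → A ⊗[k] A is a k-linear map such that Δ(x) = x ⊗ x for every single-letter word x ∈ X, and such that for every letter x₁ ∈ X and every nonempty word x₂⋯x_m (m ≥ 2), Δ(x₁x₂⋯x_m) = x₁·Δ(x₂⋯x_m) + Δ(x₁)·(x₂⋯x_m) + λ (x₁ ⊗ x₂⋯x_m). Then for every m ≥ 1 and all letters x₁, …, x_m ∈ X, the closed formula holds: Δ(x₁⋯x_m) = Σ_{i=1}^{m} (x₁⋯x_i) ⊗ (x_i⋯x_m) + λ Σ_{i=1}^{m−1} (x₁⋯x_i) ⊗ (x_{i+1}⋯x_m), where in the first sum the letter x_i occurs in both tensor factors. -/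

import Mathlib

open TensorProduct

/-- The basis element of the monoid algebra of the free monoid corresponding to
the word `x₁ ⋯ x_m` given by the list `l = [x₁, …, x_m]`. -/
noncomputable def word (k : Type*) [CommRing k] {X : Type*} (l : List X) :
    MonoidAlgebra k (FreeMonoid X) :=
  MonoidAlgebra.of k (FreeMonoid X) (FreeMonoid.ofList l)

lemma word_mul {k : Type*} [CommRing k] {X : Type*} (l1 l2 : List X) :
    word k l1 * word k l2 = word k (l1 ++ l2) := by
  simp only [word, ← map_mul]
  rfl

/-- If a linear map `Δ` on the monoid algebra of the free monoid on `X`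
satisfies `Δ(x) = x ⊗ x` on letters and the weight-`λ` recursion
`Δ(x₁ x₂ ⋯ x_m) = x₁ · Δ(x₂ ⋯ x_m) + Δ(x₁) · (x₂ ⋯ x_m) + λ x₁ ⊗ x₂ ⋯ x_m`
for nonempty tails, then the closed formula
`Δ(x₁⋯x_m) = Σ_{i=1}^m (x₁⋯x_i) ⊗ (x_i⋯x_m) + λ Σ_{i=1}^{m−1} (x₁⋯x_i) ⊗ (x_{i+1}⋯x_m)`
holds for every nonempty word. -/
theorem closed_formula_of_recursive_coproduct
    {k : Type*} [CommRing k] {X : Type*} (lam : k)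
    (Δ : MonoidAlgebra k (FreeMonoid X) →ₗ[k]
      MonoidAlgebra k (FreeMonoid X) ⊗[k] MonoidAlgebra k (FreeMonoid X))
    (hletter : ∀ x : X, Δ (word k [x]) = word k [x] ⊗ₜ[k] word k [x])
    (hrec : ∀ (x : X) (l : List X), l ≠ [] →
      Δ (word k (x :: l))
        = (word k [x] ⊗ₜ[k] (1 : MonoidAlgebra k (FreeMonoid X))) * Δ (word k l)
          + Δ (word k [x]) * ((1 : MonoidAlgebra k (FreeMonoid X)) ⊗ₜ[k] word k l)
          + lam • (word k [x] ⊗ₜ[k] word k l)) :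
    ∀ l : List X, l ≠ [] →
      Δ (word k l)
        = (∑ i ∈ Finset.range l.length,
            word k (l.take (i + 1)) ⊗ₜ[k] word k (l.drop i))
          + lam • ∑ i ∈ Finset.range (l.length - 1),
            word k (l.take (i + 1)) ⊗ₜ[k] word k (l.drop (i + 1)) := by
  intro l
  induction l with
  | nil => intro h; exact absurd rfl h
  | cons x t ih =>
    intro _
    cases t with
    | nil => simp [hletter x]
    | cons y t' =>
      have ht : (y :: t') ≠ [] := by simp
      rw [hrec x (y :: t') ht, ih ht, hletter x]
      have e1 : (∑ i ∈ Finset.range (x :: y :: t').length,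
            word k ((x :: y :: t').take (i + 1)) ⊗ₜ[k] word k ((x :: y :: t').drop i))
          = (∑ i ∈ Finset.range (y :: t').length,
              (word k [x] * word k ((y :: t').take (i + 1))) ⊗ₜ[k] word k ((y :: t').drop i))
            + word k [x] ⊗ₜ[k] word k (x :: y :: t') := by
        rw [List.length_cons, Finset.sum_range_succ']
        simp [word_mul]
      have e2 : (∑ i ∈ Finset.range ((x :: y :: t').length - 1),
            word k ((x :: y :: t').take (i + 1)) ⊗ₜ[k] word k ((x :: y :: t').drop (i + 1)))
          = (∑ i ∈ Finset.range ((y :: t').length - 1),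
              (word k [x] * word k ((y :: t').take (i + 1))) ⊗ₜ[k] word k ((y :: t').drop (i + 1)))
            + word k [x] ⊗ₜ[k] word k (y :: t') := by
        simp only [List.length_cons, Nat.add_sub_cancel]
        rw [Finset.sum_range_succ']
        simp [word_mul]
      rw [e1, e2]
      simp only [mul_add, Finset.mul_sum, Algebra.TensorProduct.tmul_mul_tmul,
        one_mul, mul_one, mul_smul_comm, smul_add, word_mul, List.singleton_append]
      abel
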